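/- arXiv:1611.04186 — 3 statements merged into one kernel-verified Lean document; each statement's English description precedes it below -/
import Mathlib

section
/- Let 𝒳 and 𝒳' be split algebraic tori (ℂ*)^n and (ℂ*)^n with coordinates (X_a) and (X'_a), let ε : I × I → ℤ be an exchange matrix, and let c ∈ I. Define the cluster 𝒳-mutation μ_c by pullback: μ_c*(X'_c) = X_c⁻¹, and for a ≠ c, μ_c*(X'_a) = X_a·(1 + X_c^{−sign(ε_{ac})})^{−ε_{ac}}. Then μ_c followed by the cluster 𝒳-mutation at c with exchange matrix μ_c(ε) is the identity rational map; i.e., cluster 𝒳-mutation at a fixed vertex is a birational involution. -/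
/-- Integer matrix mutation of the exchange matrix `ε` at the vertex `c`. -/
def intMatrixMutation {I : Type*} [DecidableEq I] (ε : I → I → ℤ) (c : I) : I → I → ℤ :=
  fun a b =>
    if a = c ∨ b = c then -ε a b
    else if ε a c * ε c b ≤ 0 then ε a b
    else ε a b + |ε a c| * ε c b

/-- The pullback of the cluster coordinates under the cluster 𝒳-mutation at `c`
with exchange matrix `ε`, expressed on tuples of elements of a field. -/
def clusterXMutation {I : Type*} [DecidableEq I] {K : Type*} [Field K]
    (ε : I → I → ℤ) (c : I) (X : I → K) : I → K :=
  fun a =>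
    if a = c then (X c)⁻¹
    else X a * (1 + X c ^ (-(ε a c).sign)) ^ (-(ε a c))

theorem stmt_9 {I : Type*} [DecidableEq I] (ε : I → I → ℤ) (c : I) :
    ∀ a : I,
      clusterXMutation (intMatrixMutation ε c) c
        (clusterXMutation ε c
          (fun i => algebraMap (MvPolynomial I ℚ) (FractionRing (MvPolynomial I ℚ))
            (MvPolynomial.X i))) a =
      algebraMap (MvPolynomial I ℚ) (FractionRing (MvPolynomial I ℚ)) (MvPolynomial.X a) := by
  intro a
  set f := algebraMap (MvPolynomial I ℚ) (FractionRing (MvPolynomial I ℚ)) with hf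
  have hinj : Function.Injective f := IsFractionRing.injective _ _
  set x := f (MvPolynomial.X c) with hxdef
  have hx : x ≠ 0 := by
    rw [hxdef]
    intro h
    have := hinj (by simpa using h : f (MvPolynomial.X c) = f 0)
    exact MvPolynomial.X_ne_zero c this
  have h1x : (1 : FractionRing (MvPolynomial I ℚ)) + x ≠ 0 := by
    intro h
    have h2 : f (1 + MvPolynomial.X c) = f 0 := by
      simpa [map_add] using h
    have h3 := hinj h2
    have := congrArg (MvPolynomial.eval (fun _ => (0 : ℚ))) h3
    simp at this
  have h1xi : (1 : FractionRing (MvPolynomial I ℚ)) + x⁻¹ ≠ 0 := by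
    have hrw : (1 : FractionRing (MvPolynomial I ℚ)) + x⁻¹ = x⁻¹ * (x + 1) := by
      field_simp
    rw [hrw]
    exact mul_ne_zero (inv_ne_zero hx) (by rwa [add_comm] at h1x)
  by_cases hac : a = c
  · subst hac
    simp [clusterXMutation]
  · simp only [clusterXMutation, intMatrixMutation, hac, if_false, if_true, eq_self_iff_true,
      or_true, if_pos, neg_neg]
    rcases lt_trichotomy (ε a c) 0 with he | he | he
    · have hs : (ε a c).sign = -1 := Int.sign_eq_neg_one_iff_neg.mpr he
      simp only [hs, Int.sign_neg, neg_neg, zpow_one, zpow_neg_one, inv_inv]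
      rw [mul_assoc, ← zpow_add₀ h1x, neg_add_cancel, zpow_zero, mul_one]
    · simp [he]
    · have hs : (ε a c).sign = 1 := Int.sign_eq_one_iff_pos.mpr he
      simp only [hs, Int.sign_neg, neg_neg, zpow_one, zpow_neg_one]
      rw [mul_assoc, ← zpow_add₀ h1xi, neg_add_cancel, zpow_zero, mul_one]
end

section
/- The tropicalization of a positive rational map is functorial: if φ : (ℂ*)^m ⇢ (ℂ*)^n and ψ : (ℂ*)^n ⇢ (ℂ*)^k are positive rational maps (each coordinate of the map is a ratio of nonzero polynomials with nonnegative integer coefficients), then the tropicalizations satisfy (ψ ∘ φ)^t = ψ^t ∘ φ^t as maps ℤ^m → ℤ^k, where the tropicalization of a positive rational function f/g is obtained by replacing + with max, × with +, ÷ with −, constants with 0, and variables X_i with integer variables x_i. -/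
open BigOperators

/-- The tropicalization of a polynomial with positive coefficients:
`max` over its monomials of the linear form given by the exponent vector. -/
def tropPoly {m : ℕ} (f : MvPolynomial (Fin m) ℤ) (x : Fin m → ℤ) : ℤ :=
  WithBot.unbotD 0 (f.support.sup fun d => ((∑ i, (d i : ℤ) * x i : ℤ) : WithBot ℤ))

/-- A polynomial is positive if it is nonzero and all its coefficients are nonnegative. -/
def IsPosPoly {m : ℕ} (f : MvPolynomial (Fin m) ℤ) : Prop :=
  f ≠ 0 ∧ ∀ d, 0 ≤ f.coeff d

open MvPolynomial Finset
namespace TropAux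

variable {m : ℕ}

/-- The linear form on exponent vectors. -/
def L (x : Fin m → ℤ) (d : Fin m →₀ ℕ) : ℤ := ∑ i, (d i : ℤ) * x i

lemma L_add (x : Fin m → ℤ) (d e : Fin m →₀ ℕ) : L x (d + e) = L x d + L x e := by
  simp [L, add_mul, Finset.sum_add_distrib]

lemma tropPoly_eq {f : MvPolynomial (Fin m) ℤ} (hf : f ≠ 0) (x : Fin m → ℤ) :
    tropPoly f x = f.support.sup' (support_nonempty.mpr hf) (L x) := by
  have : (f.support.sup fun d => ((L x d : ℤ) : WithBot ℤ)) =
      ((f.support.sup' (support_nonempty.mpr hf) (L x) : ℤ) : WithBot ℤ) := by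
    rw [Finset.coe_sup' (support_nonempty.mpr hf) (L x)]; rfl
  simp only [tropPoly]
  rw [show (fun d : Fin m →₀ ℕ => ((∑ i, (d i : ℤ) * x i : ℤ) : WithBot ℤ)) =
    (fun d => ((L x d : ℤ) : WithBot ℤ)) from rfl, this, WithBot.unbotD_coe]

lemma eval_one_pos {f : MvPolynomial (Fin m) ℤ} (hf : IsPosPoly f) :
    0 < eval (fun _ => (1 : ℤ)) f := by
  rw [eval_eq']
  obtain ⟨d, hd⟩ := support_nonempty.mpr hf.1
  refine Finset.sum_pos' (fun i _ => by simpa using hf.2 i) ⟨d, hd, ?_⟩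
  simpa using lt_of_le_of_ne (hf.2 d) (Ne.symm (by simpa [mem_support_iff] using hd))

lemma isPos_of (f : MvPolynomial (Fin m) ℤ) (h0 : ∀ d, 0 ≤ f.coeff d)
    (h1 : 0 < eval (fun _ => (1 : ℤ)) f) : IsPosPoly f :=
  ⟨fun hf => by simp [hf] at h1, h0⟩

lemma posMul {a b : MvPolynomial (Fin m) ℤ} (ha : IsPosPoly a) (hb : IsPosPoly b) :
    IsPosPoly (a * b) := by
  refine isPos_of _ (fun d => ?_) ?_
  · rw [coeff_mul]
    exact Finset.sum_nonneg fun p _ => mul_nonneg (ha.2 p.1) (hb.2 p.2)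
  · rw [map_mul]; exact mul_pos (eval_one_pos ha) (eval_one_pos hb)

lemma posAdd {a b : MvPolynomial (Fin m) ℤ} (ha : IsPosPoly a) (hb : IsPosPoly b) :
    IsPosPoly (a + b) := by
  refine isPos_of _ (fun d => ?_) ?_
  · rw [coeff_add]; exact add_nonneg (ha.2 d) (hb.2 d)
  · rw [map_add]; exact add_pos (eval_one_pos ha) (eval_one_pos hb)

lemma posPow {a : MvPolynomial (Fin m) ℤ} (ha : IsPosPoly a) (n : ℕ) :
    IsPosPoly (a ^ n) := by
  induction n with
  | zero => exact ⟨one_ne_zero, fun d => by simp [coeff_one]; split <;> simp⟩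
  | succ n ih => rw [pow_succ]; exact posMul ih ha

lemma posOne : IsPosPoly (1 : MvPolynomial (Fin m) ℤ) :=
  ⟨one_ne_zero, fun d => by simp [coeff_one]; split <;> simp⟩

lemma posProd {ι : Type*} (s : Finset ι) (t : ι → MvPolynomial (Fin m) ℤ)
    (ht : ∀ i ∈ s, IsPosPoly (t i)) : IsPosPoly (∏ i ∈ s, t i) :=
  Finset.prod_induction t IsPosPoly (fun _ _ => posMul) posOne ht

lemma posSum {ι : Type*} {s : Finset ι} (hs : s.Nonempty) (t : ι → MvPolynomial (Fin m) ℤ)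
    (ht : ∀ i ∈ s, IsPosPoly (t i)) : IsPosPoly (∑ i ∈ s, t i) :=
  Finset.sum_induction_nonempty t IsPosPoly (fun _ _ => posAdd) hs ht

lemma posC {c : ℤ} (hc : 0 < c) : IsPosPoly (MvPolynomial.C (c : ℤ) : MvPolynomial (Fin m) ℤ) := by
  refine ⟨fun hC => ?_, fun d => ?_⟩
  · have := MvPolynomial.C_injective (Fin m) ℤ (hC.trans (map_zero _).symm)
    omega
  · rw [coeff_C]; split <;> omega
end TropAux

namespace TropAux
variable {m : ℕ}

lemma sup'_add_const {ι : Type*} {s : Finset ι} (hs : s.Nonempty) (t : ι → ℤ) (c : ℤ) :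
    s.sup' hs (fun i => t i + c) = s.sup' hs t + c := by
  apply le_antisymm
  · exact Finset.sup'_le _ _ fun i hi => by
      have := add_le_add_right (Finset.le_sup' t hi) c; simpa only [add_comm] using this
  · obtain ⟨i, hi, hieq⟩ := Finset.exists_mem_eq_sup' hs t
    rw [hieq]; exact Finset.le_sup' (fun i => t i + c) hi

lemma trop_mul {a b : MvPolynomial (Fin m) ℤ} (ha : IsPosPoly a) (hb : IsPosPoly b)
    (x : Fin m → ℤ) : tropPoly (a * b) x = tropPoly a x + tropPoly b x := by
  classical
  have hab := posMul ha hb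
  rw [tropPoly_eq hab.1, tropPoly_eq ha.1, tropPoly_eq hb.1]
  apply le_antisymm
  · apply Finset.sup'_le
    intro d hd
    obtain ⟨u, hu, v, hv, huv⟩ := Finset.mem_add.mp (MvPolynomial.support_mul a b hd)
    rw [← huv, L_add]
    exact add_le_add (Finset.le_sup' (L x) hu) (Finset.le_sup' (L x) hv)
  · obtain ⟨u, hu, hueq⟩ := Finset.exists_mem_eq_sup' (MvPolynomial.support_nonempty.mpr ha.1) (L x)
    obtain ⟨v, hv, hveq⟩ := Finset.exists_mem_eq_sup' (MvPolynomial.support_nonempty.mpr hb.1) (L x)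
    rw [hueq, hveq, ← L_add]
    apply Finset.le_sup'
    rw [MvPolynomial.mem_support_iff, MvPolynomial.coeff_mul]
    have hpos : 0 < ∑ p ∈ Finset.HasAntidiagonal.antidiagonal (u + v), a.coeff p.1 * b.coeff p.2 := by
      refine Finset.sum_pos' (fun p _ => mul_nonneg (ha.2 p.1) (hb.2 p.2)) ⟨(u, v), ?_, ?_⟩
      · simp [Finset.mem_antidiagonal]
      · have h1 : 0 < a.coeff u :=
          lt_of_le_of_ne (ha.2 u) (Ne.symm (by simpa [MvPolynomial.mem_support_iff] using hu))
        have h2 : 0 < b.coeff v :=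
          lt_of_le_of_ne (hb.2 v) (Ne.symm (by simpa [MvPolynomial.mem_support_iff] using hv))
        exact mul_pos h1 h2
    omega

lemma trop_add {a b : MvPolynomial (Fin m) ℤ} (ha : IsPosPoly a) (hb : IsPosPoly b)
    (x : Fin m → ℤ) : tropPoly (a + b) x = max (tropPoly a x) (tropPoly b x) := by
  classical
  have hab := posAdd ha hb
  have hsupp : (a + b).support = a.support ∪ b.support := by
    ext d
    simp only [MvPolynomial.mem_support_iff, Finset.mem_union, MvPolynomial.coeff_add]
    have := ha.2 d; have := hb.2 d
    constructor
    · intro hne; by_contra hcon; push_neg at hcon; omega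
    · intro hne; rcases hne with hne | hne <;> omega
  rw [tropPoly_eq hab.1, tropPoly_eq ha.1, tropPoly_eq hb.1]
  have : (a + b).support.sup' (MvPolynomial.support_nonempty.mpr hab.1) (L x) =
      (a.support ∪ b.support).sup'
        (by rw [← hsupp]; exact MvPolynomial.support_nonempty.mpr hab.1) (L x) := by
    exact Finset.sup'_congr _ hsupp fun _ _ => rfl
  rw [this, Finset.sup'_union]

lemma trop_C {c : ℤ} (hc : 0 < c) (x : Fin m → ℤ) :
    tropPoly (MvPolynomial.C c : MvPolynomial (Fin m) ℤ) x = 0 := by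
  classical
  rw [tropPoly_eq (posC hc).1]
  have hs : (MvPolynomial.C c : MvPolynomial (Fin m) ℤ).support = {0} := by
    rw [MvPolynomial.C_apply, MvPolynomial.support_monomial, if_neg (by omega)]
  apply le_antisymm
  · apply Finset.sup'_le
    intro d hd
    rw [hs, Finset.mem_singleton] at hd
    simp [hd, L]
  · have h0 : (0 : Fin m →₀ ℕ) ∈ (MvPolynomial.C c : MvPolynomial (Fin m) ℤ).support := by
      rw [hs]; exact Finset.mem_singleton_self _
    have := Finset.le_sup' (L x) h0
    simpa [L] using this

lemma trop_pow {a : MvPolynomial (Fin m) ℤ} (ha : IsPosPoly a) (n : ℕ) (x : Fin m → ℤ) :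
    tropPoly (a ^ n) x = n * tropPoly a x := by
  induction n with
  | zero => simp only [pow_zero, Nat.cast_zero, zero_mul]; rw [show (1 : MvPolynomial (Fin m) ℤ) = MvPolynomial.C 1 from (map_one _).symm]; exact trop_C one_pos x
  | succ n ih =>
    rw [pow_succ, trop_mul (posPow ha n) ha, ih]; push_cast; ring

end TropAux

namespace TropAux
variable {m : ℕ}

lemma trop_prod {ι : Type*} (s : Finset ι) (t : ι → MvPolynomial (Fin m) ℤ)
    (ht : ∀ i ∈ s, IsPosPoly (t i)) (x : Fin m → ℤ) :
    tropPoly (∏ i ∈ s, t i) x = ∑ i ∈ s, tropPoly (t i) x := by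
  classical
  induction s using Finset.induction with
  | empty =>
    simp only [Finset.prod_empty, Finset.sum_empty]
    rw [show (1 : MvPolynomial (Fin m) ℤ) = MvPolynomial.C 1 from (map_one _).symm]
    exact trop_C one_pos x
  | @insert a s' hni ih =>
    rw [Finset.prod_insert hni, Finset.sum_insert hni,
      trop_mul (ht a (Finset.mem_insert_self a s'))
        (posProd s' t fun i hi => ht i (Finset.mem_insert_of_mem hi)),
      ih fun i hi => ht i (Finset.mem_insert_of_mem hi)]

lemma trop_sum {ι : Type*} {s : Finset ι} (hs : s.Nonempty) (t : ι → MvPolynomial (Fin m) ℤ)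
    (ht : ∀ i ∈ s, IsPosPoly (t i)) (x : Fin m → ℤ) :
    tropPoly (∑ i ∈ s, t i) x = s.sup' hs (fun i => tropPoly (t i) x) := by
  classical
  induction hs using Finset.Nonempty.cons_induction with
  | singleton a => simp
  | cons a s' hni hs' ih =>
    rw [Finset.sum_cons, Finset.sup'_cons,
      trop_add (ht a (Finset.mem_cons_self a s'))
        (posSum hs' t fun i hi => ht i (Finset.mem_cons_of_mem hi)),
      ih fun i hi => ht i (Finset.mem_cons_of_mem hi)]

end TropAux

namespace TropAux
variable {m n : ℕ}

/-- `p` with `f i / g i` substituted for `Xᵢ` and denominators cleared. -/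
noncomputable def cleared (f g : Fin n → MvPolynomial (Fin m) ℤ) (p : MvPolynomial (Fin n) ℤ) :
    MvPolynomial (Fin m) ℤ :=
  ∑ d ∈ p.support, MvPolynomial.C (p.coeff d) *
    ∏ i, f i ^ d i * g i ^ (p.degreeOf i - d i)

lemma coeff_pos_of_mem {p : MvPolynomial (Fin n) ℤ} (hp : IsPosPoly p) {d : Fin n →₀ ℕ}
    (hd : d ∈ p.support) : 0 < p.coeff d :=
  lt_of_le_of_ne (hp.2 d) (Ne.symm (by simpa [MvPolynomial.mem_support_iff] using hd))

lemma pos_term (f g : Fin n → MvPolynomial (Fin m) ℤ)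
    (hf : ∀ i, IsPosPoly (f i)) (hg : ∀ i, IsPosPoly (g i))
    {p : MvPolynomial (Fin n) ℤ} (hp : IsPosPoly p) {d : Fin n →₀ ℕ} (hd : d ∈ p.support) :
    IsPosPoly (MvPolynomial.C (p.coeff d) * ∏ i, f i ^ d i * g i ^ (p.degreeOf i - d i)) :=
  posMul (posC (coeff_pos_of_mem hp hd))
    (posProd _ _ fun i _ => posMul (posPow (hf i) _) (posPow (hg i) _))

lemma pos_cleared (f g : Fin n → MvPolynomial (Fin m) ℤ)
    (hf : ∀ i, IsPosPoly (f i)) (hg : ∀ i, IsPosPoly (g i))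
    {p : MvPolynomial (Fin n) ℤ} (hp : IsPosPoly p) : IsPosPoly (cleared f g p) :=
  posSum (MvPolynomial.support_nonempty.mpr hp.1) _
    (fun _ hd => pos_term f g hf hg hp hd)

lemma le_degreeOf {p : MvPolynomial (Fin n) ℤ} {d : Fin n →₀ ℕ} (hd : d ∈ p.support)
    (i : Fin n) : d i ≤ p.degreeOf i := by
  rw [MvPolynomial.degreeOf_eq_sup]; exact Finset.le_sup (f := fun m => m i) hd

lemma trop_cleared (f g : Fin n → MvPolynomial (Fin m) ℤ)
    (hf : ∀ i, IsPosPoly (f i)) (hg : ∀ i, IsPosPoly (g i))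
    {p : MvPolynomial (Fin n) ℤ} (hp : IsPosPoly p) (x : Fin m → ℤ) :
    tropPoly (cleared f g p) x =
      tropPoly p (fun i => tropPoly (f i) x - tropPoly (g i) x) +
        ∑ i, (p.degreeOf i : ℤ) * tropPoly (g i) x := by
  classical
  have hne : p.support.Nonempty := MvPolynomial.support_nonempty.mpr hp.1
  rw [cleared, trop_sum hne _ (fun d hd => pos_term f g hf hg hp hd) x]
  have hterm : ∀ d ∈ p.support,
      tropPoly (MvPolynomial.C (p.coeff d) * ∏ i, f i ^ d i * g i ^ (p.degreeOf i - d i)) x =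
        L (fun i => tropPoly (f i) x - tropPoly (g i) x) d +
          ∑ i, (p.degreeOf i : ℤ) * tropPoly (g i) x := by
    intro d hd
    rw [trop_mul (posC (coeff_pos_of_mem hp hd))
        (posProd _ _ fun i _ => posMul (posPow (hf i) _) (posPow (hg i) _)) x,
      trop_C (coeff_pos_of_mem hp hd) x, zero_add,
      trop_prod _ _ (fun i _ => posMul (posPow (hf i) _) (posPow (hg i) _)) x]
    rw [L, ← Finset.sum_add_distrib]
    apply Finset.sum_congr rfl
    intro i _
    rw [trop_mul (posPow (hf i) _) (posPow (hg i) _) x, trop_pow (hf i) _ x,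
      trop_pow (hg i) _ x]
    have hle := le_degreeOf hd i
    have : ((p.degreeOf i - d i : ℕ) : ℤ) = (p.degreeOf i : ℤ) - (d i : ℤ) := by
      omega
    rw [this]; ring
  rw [Finset.sup'_congr hne rfl hterm,
    sup'_add_const hne (L (fun i => tropPoly (f i) x - tropPoly (g i) x)) _,
    tropPoly_eq hp.1]

lemma alg_cleared (f g : Fin n → MvPolynomial (Fin m) ℤ)
    (hg : ∀ i, IsPosPoly (g i)) (p : MvPolynomial (Fin n) ℤ) :
    algebraMap (MvPolynomial (Fin m) ℤ) (FractionRing (MvPolynomial (Fin m) ℤ)) (cleared f g p) =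
      MvPolynomial.eval₂ (Int.castRingHom (FractionRing (MvPolynomial (Fin m) ℤ)))
        (fun i =>
          algebraMap (MvPolynomial (Fin m) ℤ) (FractionRing (MvPolynomial (Fin m) ℤ)) (f i) /
          algebraMap (MvPolynomial (Fin m) ℤ) (FractionRing (MvPolynomial (Fin m) ℤ)) (g i)) p *
      algebraMap (MvPolynomial (Fin m) ℤ) (FractionRing (MvPolynomial (Fin m) ℤ))
        (∏ i, g i ^ p.degreeOf i) := by
  classical
  set K := FractionRing (MvPolynomial (Fin m) ℤ)
  set A := algebraMap (MvPolynomial (Fin m) ℤ) K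
  have hGne : ∀ i, A (g i) ≠ 0 := fun i hzero =>
    (hg i).1 (IsFractionRing.injective _ K (by rw [hzero, map_zero]))
  rw [MvPolynomial.eval₂_eq', Finset.sum_mul, cleared, map_sum]
  apply Finset.sum_congr rfl
  intro d hd
  rw [map_mul, map_prod, map_prod]
  have hC : A (MvPolynomial.C (p.coeff d)) = (Int.castRingHom K) (p.coeff d) := by
    rw [show (MvPolynomial.C (p.coeff d) : MvPolynomial (Fin m) ℤ) =
      ((p.coeff d : ℤ) : MvPolynomial (Fin m) ℤ) from rfl, map_intCast]
    simp
  rw [hC, mul_assoc, ← Finset.prod_mul_distrib]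
  congr 1
  apply Finset.prod_congr rfl
  intro i _
  rw [map_mul, map_pow, map_pow, map_pow]
  have hsplit : A (g i) ^ p.degreeOf i = A (g i) ^ d i * A (g i) ^ (p.degreeOf i - d i) := by
    rw [← pow_add]
    congr 1
    have := le_degreeOf hd i
    omega
  rw [hsplit, div_pow, ← mul_assoc, div_mul_cancel₀ _ (pow_ne_zero _ (hGne i))]

end TropAux

open TropAux in
theorem stmt_11 {m n k : ℕ}
    -- the positive rational map φ : (ℂ*)^m ⇢ (ℂ*)^n, with components f j / g j
    (f g : Fin n → MvPolynomial (Fin m) ℤ)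
    (hf : ∀ j, IsPosPoly (f j)) (hg : ∀ j, IsPosPoly (g j))
    -- the positive rational map ψ : (ℂ*)^n ⇢ (ℂ*)^k, with components p j / q j
    (p q : Fin k → MvPolynomial (Fin n) ℤ)
    (hp : ∀ j, IsPosPoly (p j)) (hq : ∀ j, IsPosPoly (q j))
    -- a positive representation h j / e j of the composite ψ ∘ φ
    (h e : Fin k → MvPolynomial (Fin m) ℤ)
    (hh : ∀ j, IsPosPoly (h j)) (he : ∀ j, IsPosPoly (e j))
    (hcomp : ∀ j,
      algebraMap (MvPolynomial (Fin m) ℤ) (FractionRing (MvPolynomial (Fin m) ℤ)) (h j) /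
        algebraMap (MvPolynomial (Fin m) ℤ) (FractionRing (MvPolynomial (Fin m) ℤ)) (e j) =
      MvPolynomial.eval₂ (Int.castRingHom (FractionRing (MvPolynomial (Fin m) ℤ)))
          (fun i =>
            algebraMap (MvPolynomial (Fin m) ℤ) (FractionRing (MvPolynomial (Fin m) ℤ)) (f i) /
            algebraMap (MvPolynomial (Fin m) ℤ) (FractionRing (MvPolynomial (Fin m) ℤ)) (g i))
          (p j) /
      MvPolynomial.eval₂ (Int.castRingHom (FractionRing (MvPolynomial (Fin m) ℤ)))
          (fun i =>
            algebraMap (MvPolynomial (Fin m) ℤ) (FractionRing (MvPolynomial (Fin m) ℤ)) (f i) /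
            algebraMap (MvPolynomial (Fin m) ℤ) (FractionRing (MvPolynomial (Fin m) ℤ)) (g i))
          (q j)) :
    -- (ψ ∘ φ)^t = ψ^t ∘ φ^t
    ∀ (j : Fin k) (x : Fin m → ℤ),
      tropPoly (h j) x - tropPoly (e j) x =
        tropPoly (p j) (fun i => tropPoly (f i) x - tropPoly (g i) x) -
          tropPoly (q j) (fun i => tropPoly (f i) x - tropPoly (g i) x) := by
  intro j x
  classical
  set K := FractionRing (MvPolynomial (Fin m) ℤ)
  set A := algebraMap (MvPolynomial (Fin m) ℤ) K with hA
  set P := cleared f g (p j) with hPdef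
  set Q := cleared f g (q j) with hQdef
  set GN : MvPolynomial (Fin m) ℤ := ∏ i, g i ^ (p j).degreeOf i with hGNdef
  set GM : MvPolynomial (Fin m) ℤ := ∏ i, g i ^ (q j).degreeOf i with hGMdef
  have hfP : IsPosPoly P := pos_cleared f g hf hg (hp j)
  have hfQ : IsPosPoly Q := pos_cleared f g hf hg (hq j)
  have hGN : IsPosPoly GN := posProd _ _ fun i _ => posPow (hg i) _
  have hGM : IsPosPoly GM := posProd _ _ fun i _ => posPow (hg i) _
  have hinj : Function.Injective A := IsFractionRing.injective _ K
  have hAne : ∀ (r : MvPolynomial (Fin m) ℤ), r ≠ 0 → A r ≠ 0 := fun r hr hz =>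
    hr (hinj (by rw [hz, map_zero]))
  set Ep := MvPolynomial.eval₂ (Int.castRingHom K) (fun i => A (f i) / A (g i)) (p j) with hEp
  set Eq' := MvPolynomial.eval₂ (Int.castRingHom K) (fun i => A (f i) / A (g i)) (q j) with hEq'
  have hAP : A P = Ep * A GN := alg_cleared f g hg (p j)
  have hAQ : A Q = Eq' * A GM := alg_cleared f g hg (q j)
  have hEqne : Eq' ≠ 0 := by
    intro hz
    exact hAne Q hfQ.1 (by rw [hAQ, hz, zero_mul])
  have h1 : A (h j) * Eq' = Ep * A (e j) :=
    (div_eq_div_iff (hAne _ (he j).1) hEqne).mp (hcomp j)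
  have h2 : A (h j * (Q * GN)) = A (P * (e j * GM)) := by
    rw [map_mul, map_mul, map_mul, map_mul, hAQ, hAP]
    linear_combination (A GM * A GN) * h1
  have h3 : h j * (Q * GN) = P * (e j * GM) := hinj h2
  have htrop := congrArg (fun r => tropPoly r x) h3
  rw [trop_mul (hh j) (posMul hfQ hGN) x, trop_mul hfQ hGN x,
    trop_mul hfP (posMul (he j) hGM) x, trop_mul (he j) hGM x] at htrop
  have hGNtrop : tropPoly GN x = ∑ i, ((p j).degreeOf i : ℤ) * tropPoly (g i) x := by
    rw [hGNdef, trop_prod _ _ (fun i _ => posPow (hg i) _) x]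
    exact Finset.sum_congr rfl fun i _ => trop_pow (hg i) _ x
  have hGMtrop : tropPoly GM x = ∑ i, ((q j).degreeOf i : ℤ) * tropPoly (g i) x := by
    rw [hGMdef, trop_prod _ _ (fun i _ => posPow (hg i) _) x]
    exact Finset.sum_congr rfl fun i _ => trop_pow (hg i) _ x
  have hPtrop := trop_cleared f g hf hg (hp j) x
  have hQtrop := trop_cleared f g hf hg (hq j) x
  rw [← hPdef] at hPtrop
  rw [← hQdef] at hQtrop
  rw [hGNtrop, hGMtrop, hPtrop, hQtrop] at htrop
  linarith
end

section
/- Amalgamation of seeds commutes with mutation at non-frozen vertices: let {(I^s, I₀^s, ε^s, d^s)} be a finite family of seeds with injections i^s : I^s → K satisfying the amalgamation conditions (images cover K; preimages of overlaps are frozen; matching d values on overlaps), and let ε be the amalgamated exchange matrix ε_{ab} = ∑_{i^s(a^s)=a, i^s(b^s)=b} ε^s_{a^s b^s}. If a = i^s(a^s) for a non-frozen vertex a^s ∈ I^s \ I₀^s (so a lies in the image of no other i^t), then mutating ε at a equals the amalgamation of the family in which ε^s is replaced by its mutation at a^s (and all other ε^t unchanged). -/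
open BigOperators

/-- Fock–Goncharov matrix mutation of the exchange matrix `ε` at the vertex `c`. -/
def matrixMutation {I : Type*} [DecidableEq I] (ε : I → I → ℚ) (c : I) : I → I → ℚ :=
  fun a b =>
    if a = c ∨ b = c then -ε a b
    else if ε a c * ε c b ≤ 0 then ε a b
    else ε a b + |ε a c| * ε c b

/-- The amalgamated exchange matrix on `K`:
`ε_{ab} = ∑_{i^s(aˢ)=a, i^s(bˢ)=b} εˢ_{aˢbˢ}`. -/
def amalgamatedMatrix {S K : Type*} [Fintype S] [DecidableEq K] {I : S → Type*}
    [∀ s, Fintype (I s)] (ι : ∀ s, I s → K) (ε : ∀ s, I s → I s → ℚ) : K → K → ℚ :=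
  fun a b => ∑ s, ∑ as : I s, ∑ bs : I s,
    if ι s as = a ∧ ι s bs = b then ε s as bs else 0

theorem stmt_19 {S K : Type*} [Fintype S] [DecidableEq S] [DecidableEq K]
    {I : S → Type*} [∀ s, Fintype (I s)] [∀ s, DecidableEq (I s)]
    (I₀ : ∀ s, Set (I s)) (ε : ∀ s, I s → I s → ℚ) (d : ∀ s, I s → ℤ)
    (ι : ∀ s, I s → K)
    (hinj : ∀ s, Function.Injective (ι s))
    -- (1) the images of the maps ι s cover K
    (hcover : ∀ k : K, ∃ s a, ι s a = k)
    -- (2) preimages of overlaps are frozen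
    (hoverlap : ∀ s t, s ≠ t → ∀ (a : I s) (b : I t), ι s a = ι t b → a ∈ I₀ s)
    -- (3) matching multipliers on overlaps
    (hd : ∀ s t (a : I s) (b : I t), ι s a = ι t b → d s a = d t b)
    -- a non-frozen vertex of the seed indexed by s₀
    (s₀ : S) (a₀ : I s₀) (ha₀ : a₀ ∉ I₀ s₀) :
    matrixMutation (amalgamatedMatrix ι ε) (ι s₀ a₀) =
      amalgamatedMatrix ι (Function.update ε s₀ (matrixMutation (ε s₀) a₀)) := by
  classical
  set μ := matrixMutation (ε s₀) a₀ with hμdef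
  funext a b
  set c := ι s₀ a₀ with hc
  have hnc : ∀ s, s ≠ s₀ → ∀ x : I s, ι s x ≠ c := fun s hs x hx =>
    ha₀ (hoverlap s₀ s (Ne.symm hs) a₀ x hx.symm)
  have hcol1 : ∀ (f : ∀ s, I s → I s → ℚ) (k : K),
      amalgamatedMatrix ι f c k
        = ∑ bs : I s₀, if ι s₀ bs = k then f s₀ a₀ bs else 0 := by
    intro f k
    unfold amalgamatedMatrix
    rw [Finset.sum_eq_single s₀]
    · simp only [hc, (hinj s₀).eq_iff, ite_and]
      rw [Finset.sum_comm]
      simp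
    · intro s _ hs
      apply Finset.sum_eq_zero; intro as _
      apply Finset.sum_eq_zero; intro bs _
      simp [hnc s hs as]
    · simp
  have hcol2 : ∀ (f : ∀ s, I s → I s → ℚ) (k : K),
      amalgamatedMatrix ι f k c
        = ∑ as : I s₀, if ι s₀ as = k then f s₀ as a₀ else 0 := by
    intro f k
    unfold amalgamatedMatrix
    rw [Finset.sum_eq_single s₀]
    · apply Finset.sum_congr rfl
      intro as _
      simp only [hc, (hinj s₀).eq_iff, ite_and]
      simp
    · intro s _ hs
      apply Finset.sum_eq_zero; intro as _
      apply Finset.sum_eq_zero; intro bs _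
      simp [hnc s hs bs]
    · simp
  show matrixMutation (amalgamatedMatrix ι ε) c a b = _
  by_cases hab : a = c ∨ b = c
  · have LHS : matrixMutation (amalgamatedMatrix ι ε) c a b = -amalgamatedMatrix ι ε a b := by
      simp [matrixMutation, hab]
    rcases hab with h | h
    · subst h
      rw [LHS, hcol1, hcol1, ← Finset.sum_neg_distrib]
      apply Finset.sum_congr rfl
      intro bs _
      by_cases hbs : ι s₀ bs = b
      · simp [hbs, Function.update_self, hμdef, matrixMutation]
      · simp [hbs]
    · subst h
      rw [LHS, hcol2, hcol2, ← Finset.sum_neg_distrib]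
      apply Finset.sum_congr rfl
      intro as _
      by_cases has : ι s₀ as = a
      · simp [has, Function.update_self, hμdef, matrixMutation]
      · simp [has]
  · push_neg at hab
    obtain ⟨ha, hb⟩ := hab
    have key : amalgamatedMatrix ι (Function.update ε s₀ μ) a b
        = amalgamatedMatrix ι ε a b
          + ∑ as : I s₀, ∑ bs : I s₀,
              if ι s₀ as = a ∧ ι s₀ bs = b then μ as bs - ε s₀ as bs else 0 := by
      have hsub : amalgamatedMatrix ι (Function.update ε s₀ μ) a b
          - amalgamatedMatrix ι ε a b
          = ∑ as : I s₀, ∑ bs : I s₀,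
              if ι s₀ as = a ∧ ι s₀ bs = b then μ as bs - ε s₀ as bs else 0 := by
        unfold amalgamatedMatrix
        rw [← Finset.sum_sub_distrib]
        rw [Finset.sum_eq_single s₀]
        · rw [← Finset.sum_sub_distrib]
          apply Finset.sum_congr rfl
          intro as _
          rw [← Finset.sum_sub_distrib]
          apply Finset.sum_congr rfl
          intro bs _
          split_ifs <;> simp [Function.update_self]
        · intro s _ hs
          simp [Function.update_of_ne hs]
        · simp
      linarith [hsub]
    rw [key]
    have hLHS : matrixMutation (amalgamatedMatrix ι ε) c a b
        = if amalgamatedMatrix ι ε a c * amalgamatedMatrix ι ε c b ≤ 0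
          then amalgamatedMatrix ι ε a b
          else amalgamatedMatrix ι ε a b
            + |amalgamatedMatrix ι ε a c| * amalgamatedMatrix ι ε c b := by
      simp [matrixMutation, ha, hb]
    rw [hLHS, hcol1, hcol2]
    have hD : (∑ as : I s₀, ∑ bs : I s₀,
          if ι s₀ as = a ∧ ι s₀ bs = b then μ as bs - ε s₀ as bs else 0)
        = ∑ as : I s₀, ∑ bs : I s₀,
            if ι s₀ as = a ∧ ι s₀ bs = b then
              (if ε s₀ as a₀ * ε s₀ a₀ bs ≤ 0 then 0 else |ε s₀ as a₀| * ε s₀ a₀ bs)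
            else 0 := by
      apply Finset.sum_congr rfl; intro as _
      apply Finset.sum_congr rfl; intro bs _
      by_cases h : ι s₀ as = a ∧ ι s₀ bs = b
      · have has : as ≠ a₀ := fun e => ha (by rw [← h.1, e])
        have hbs : bs ≠ a₀ := fun e => hb (by rw [← h.2, e])
        simp only [h, if_true, hμdef, matrixMutation, has, hbs, or_self, if_false]
        split_ifs <;> ring
      · simp [h]
    rw [hD]
    by_cases hea : ∃ as : I s₀, ι s₀ as = a
    · obtain ⟨as', rfl⟩ := hea
      by_cases heb : ∃ bs : I s₀, ι s₀ bs = b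
      · obtain ⟨bs', rfl⟩ := heb
        have e1 : (∑ as : I s₀, if ι s₀ as = ι s₀ as' then ε s₀ as a₀ else 0)
            = ε s₀ as' a₀ := by simp [(hinj s₀).eq_iff]
        have e2 : (∑ bs : I s₀, if ι s₀ bs = ι s₀ bs' then ε s₀ a₀ bs else 0)
            = ε s₀ a₀ bs' := by simp [(hinj s₀).eq_iff]
        have e3 : (∑ as : I s₀, ∑ bs : I s₀,
            if ι s₀ as = ι s₀ as' ∧ ι s₀ bs = ι s₀ bs' then
              (if ε s₀ as a₀ * ε s₀ a₀ bs ≤ 0 then 0 else |ε s₀ as a₀| * ε s₀ a₀ bs)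
            else 0)
            = (if ε s₀ as' a₀ * ε s₀ a₀ bs' ≤ 0 then 0 else |ε s₀ as' a₀| * ε s₀ a₀ bs') := by
          simp [(hinj s₀).eq_iff, ite_and]
        rw [e1, e2, e3]
        split_ifs <;> ring
      · push_neg at heb
        have e2 : (∑ bs : I s₀, if ι s₀ bs = b then ε s₀ a₀ bs else 0) = 0 := by
          apply Finset.sum_eq_zero; intro bs _; simp [heb bs]
        have e3 : (∑ as : I s₀, ∑ bs : I s₀,
            if ι s₀ as = ι s₀ as' ∧ ι s₀ bs = b then
              (if ε s₀ as a₀ * ε s₀ a₀ bs ≤ 0 then 0 else |ε s₀ as a₀| * ε s₀ a₀ bs)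
            else 0) = 0 := by
          apply Finset.sum_eq_zero; intro as _
          apply Finset.sum_eq_zero; intro bs _
          simp [heb bs]
        rw [e2, e3]
        simp
    · push_neg at hea
      have e1 : (∑ as : I s₀, if ι s₀ as = a then ε s₀ as a₀ else 0) = 0 := by
        apply Finset.sum_eq_zero; intro as _; simp [hea as]
      have e3 : (∑ as : I s₀, ∑ bs : I s₀,
          if ι s₀ as = a ∧ ι s₀ bs = b then
            (if ε s₀ as a₀ * ε s₀ a₀ bs ≤ 0 then 0 else |ε s₀ as a₀| * ε s₀ a₀ bs)
          else 0) = 0 := by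
        apply Finset.sum_eq_zero; intro as _
        apply Finset.sum_eq_zero; intro bs _
        simp [hea as]
      rw [e1, e3]
      simp
end
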